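/- arXiv:2005.02126 — 2 statements merged into one kernel-verified Lean document; each statement's English description precedes it below -/
import Mathlib

section
/- Completeness of the upper end of the robust satisfaction interval: for every STL formula φ over a finite set Y of variables, every finite signal σ = u₀,…,u_{n−1} ∈ (ℝ^Y)^*, and every k ∈ ℕ, if the suffix σ[k..|σ|−1] belongs to the supremum finite semantics ⟦φ⟧_sup then sup(RoSI(φ,σ,k)) ≥ 0. -/
namespace STLpaper

/-- Discrete-time STL formulas over a set `Y` of variables:
`⊤ | y > c | y < c | ¬φ | φ ∨ φ' | 𝒳 φ | φ U_{[i,j]} φ'` with `i ≤ j`, `i j ∈ ℕ ∪ {+∞}`. -/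
inductive STL (Y : Type) : Type where
  | top : STL Y
  | gt : Y → ℝ → STL Y
  | lt : Y → ℝ → STL Y
  | neg : STL Y → STL Y
  | or : STL Y → STL Y → STL Y
  | next : STL Y → STL Y
  | untl : (i j : ℕ∞) → i ≤ j → STL Y → STL Y → STL Y

variable {Y : Type}

/-- The satisfaction relation `(σ, k) ⊨ φ` for an infinite signal `σ : ℕ → Y → ℝ`. -/
def Sat (σ : ℕ → Y → ℝ) : STL Y → ℕ → Prop
  | .top, _ => True
  | .gt y c, k => σ k y > c
  | .lt y c, k => σ k y < c
  | .neg φ, k => ¬ Sat σ φ k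
  | .or φ ψ, k => Sat σ φ k ∨ Sat σ ψ k
  | .next φ, k => Sat σ φ (k + 1)
  | .untl i j _ φ ψ, k =>
      ∃ l : ℕ, ((k : ℕ∞) + i ≤ (l : ℕ∞) ∧ (l : ℕ∞) ≤ (k : ℕ∞) + j) ∧
        Sat σ ψ l ∧ ∀ m : ℕ, k ≤ m → m ≤ l → Sat σ φ m

/-- The robust semantics `ρ(φ, σ, k) ∈ ℝ ∪ {±∞}` for an infinite signal `σ`. -/
noncomputable def Rob (σ : ℕ → Y → ℝ) : STL Y → ℕ → EReal
  | .top, _ => ⊤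
  | .gt y c, k => ((σ k y - c : ℝ) : EReal)
  | .lt y c, k => ((-(σ k y) + c : ℝ) : EReal)
  | .neg φ, k => - Rob σ φ k
  | .or φ ψ, k => max (Rob σ φ k) (Rob σ ψ k)
  | .next φ, k => Rob σ φ (k + 1)
  | .untl i j _ φ ψ, k =>
      ⨆ l ∈ {l : ℕ | (k : ℕ∞) + i ≤ (l : ℕ∞) ∧ (l : ℕ∞) ≤ (k : ℕ∞) + j},
        min (Rob σ ψ l) (⨅ m ∈ Finset.Icc k l, Rob σ φ m)

/-- Concatenation `σ · σ'` of a finite signal with an infinite one. -/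
def cat (σ : List (Y → ℝ)) (σ' : ℕ → Y → ℝ) : ℕ → Y → ℝ :=
  fun n => if h : n < σ.length then σ.get ⟨n, h⟩ else σ' (n - σ.length)

/-- Supremum finite semantics `⟦φ⟧_sup`. -/
def supSem (φ : STL Y) : Set (List (Y → ℝ)) :=
  {σ | ∃ σ' : ℕ → Y → ℝ, Sat (cat σ σ') φ 0}

/-- Infimum finite semantics `⟦φ⟧_inf`. -/
def infSem (φ : STL Y) : Set (List (Y → ℝ)) :=
  {σ | ∀ σ' : ℕ → Y → ℝ, Sat (cat σ σ') φ 0}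

/-- Upper end of the robust satisfaction interval `RoSI(φ, σ, k)`. -/
noncomputable def RoSIsup (φ : STL Y) (σ : List (Y → ℝ)) (k : ℕ) : EReal :=
  ⨆ σ' : ℕ → Y → ℝ, Rob (cat σ σ') φ k

/-- Lower end of the robust satisfaction interval `RoSI(φ, σ, k)`. -/
noncomputable def RoSIinf (φ : STL Y) (σ : List (Y → ℝ)) (k : ℕ) : EReal :=
  ⨅ σ' : ℕ → Y → ℝ, Rob (cat σ σ') φ k

/-- The inductively computed interval `[ρ](φ, σ, k)`, as a pair `(inf, sup)`. -/
noncomputable def finRob (σ : List (Y → ℝ)) : STL Y → ℕ → EReal × EReal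
  | .top, _ => (⊤, ⊤)
  | .gt y c, k =>
      if h : k < σ.length then
        (((σ.get ⟨k, h⟩ y - c : ℝ) : EReal), ((σ.get ⟨k, h⟩ y - c : ℝ) : EReal))
      else (⊥, ⊤)
  | .lt y c, k =>
      if h : k < σ.length then
        (((-(σ.get ⟨k, h⟩ y) + c : ℝ) : EReal), ((-(σ.get ⟨k, h⟩ y) + c : ℝ) : EReal))
      else (⊥, ⊤)
  | .neg φ, k => (- (finRob σ φ k).2, - (finRob σ φ k).1)
  | .or φ ψ, k =>
      (max (finRob σ φ k).1 (finRob σ ψ k).1, max (finRob σ φ k).2 (finRob σ ψ k).2)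
  | .next φ, k => finRob σ φ (k + 1)
  | .untl i j _ φ ψ, k =>
      (⨆ l ∈ {l : ℕ | (k : ℕ∞) + i ≤ (l : ℕ∞) ∧ (l : ℕ∞) ≤ (k : ℕ∞) + j},
          min ((finRob σ ψ l).1) (⨅ m ∈ Finset.Icc k l, (finRob σ φ m).1),
       ⨆ l ∈ {l : ℕ | (k : ℕ∞) + i ≤ (l : ℕ∞) ∧ (l : ℕ∞) ≤ (k : ℕ∞) + j},
          min ((finRob σ ψ l).2) (⨅ m ∈ Finset.Icc k l, (finRob σ φ m).2))

end STLpaper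


namespace STLpaper

variable {Y : Type}

lemma cat_shift (σ : List (Y → ℝ)) (σ' : ℕ → Y → ℝ) (k m : ℕ) :
    cat σ (fun j => σ' (j - (k - σ.length))) (k + m) = cat (σ.drop k) σ' m := by
  unfold cat
  rcases lt_or_ge (k + m) σ.length with h1 | h1
  · have h2 : m < (σ.drop k).length := by simp only [List.length_drop]; omega
    rw [dif_pos h1, dif_pos h2]
    simp only [List.get_eq_getElem, List.getElem_drop]
  · have h2 : ¬ m < (σ.drop k).length := by simp only [List.length_drop]; omega
    rw [dif_neg (not_lt.2 h1), dif_neg h2]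
    rw [List.length_drop]
    have harith : k + m - σ.length - (k - σ.length) = m - (σ.length - k) := by omega
    show σ' (k + m - σ.length - (k - σ.length)) = σ' (m - (σ.length - k))
    rw [harith]

lemma ereal_neg_nonneg {a : EReal} (h : a ≤ 0) : 0 ≤ -a := by
  rw [← neg_zero]; exact EReal.neg_le_neg_iff.mpr h

lemma ereal_neg_nonpos {a : EReal} (h : 0 ≤ a) : -a ≤ 0 := by
  rw [← neg_zero]; exact EReal.neg_le_neg_iff.mpr h

lemma sound (φ : STL Y) : ∀ (σ : ℕ → Y → ℝ) (k : ℕ),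
    (Sat σ φ k → 0 ≤ Rob σ φ k) ∧ (¬ Sat σ φ k → Rob σ φ k ≤ 0) := by
  induction φ with
  | top => exact fun σ k => ⟨fun _ => le_top, fun h => absurd trivial h⟩
  | gt y c =>
      intro σ k
      constructor
      · intro h
        simp only [Sat] at h
        simp only [Rob, ← EReal.coe_zero, EReal.coe_le_coe_iff]
        linarith
      · intro h
        simp only [Sat, not_lt] at h
        simp only [Rob, ← EReal.coe_zero, EReal.coe_le_coe_iff]
        linarith
  | lt y c =>
      intro σ k
      constructor
      · intro h
        simp only [Sat] at h
        simp only [Rob, ← EReal.coe_zero, EReal.coe_le_coe_iff]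
        linarith
      · intro h
        simp only [Sat, not_lt] at h
        simp only [Rob, ← EReal.coe_zero, EReal.coe_le_coe_iff]
        linarith
  | neg φ ih =>
      intro σ k
      constructor
      · intro h
        simp only [Sat, not_not] at h
        simp only [Rob]
        exact ereal_neg_nonneg ((ih σ k).2 h)
      · intro h
        simp only [Sat, not_not] at h
        simp only [Rob]
        exact ereal_neg_nonpos ((ih σ k).1 h)
  | or φ ψ ih1 ih2 =>
      intro σ k
      constructor
      · rintro (h | h)
        · exact le_max_of_le_left ((ih1 σ k).1 h)
        · exact le_max_of_le_right ((ih2 σ k).1 h)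
      · intro h
        simp only [Sat, not_or] at h
        exact max_le ((ih1 σ k).2 h.1) ((ih2 σ k).2 h.2)
  | next φ ih => exact fun σ k => ih σ (k + 1)
  | untl i j hij φ ψ ih1 ih2 =>
      intro σ k
      constructor
      · rintro ⟨l, hl, hψ, hφ⟩
        simp only [Rob]
        refine le_trans ?_ (le_iSup_of_le l (le_iSup_of_le hl le_rfl))
        refine le_min ((ih2 σ l).1 hψ) (le_iInf fun m => le_iInf fun hm => ?_)
        rw [Finset.mem_Icc] at hm
        exact (ih1 σ m).1 (hφ m hm.1 hm.2)
      · intro h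
        simp only [Rob]
        refine iSup_le fun l => iSup_le fun hl => ?_
        by_cases hψ : Sat σ ψ l
        · have hnall : ¬ ∀ m : ℕ, k ≤ m → m ≤ l → Sat σ φ m := fun hall =>
            h ⟨l, hl, hψ, hall⟩
          push_neg at hnall
          obtain ⟨m, hm1, hm2, hm3⟩ := hnall
          refine min_le_of_right_le (le_trans ?_ ((ih1 σ m).2 hm3))
          exact iInf₂_le m (Finset.mem_Icc.mpr ⟨hm1, hm2⟩)
        · exact min_le_of_left_le ((ih2 σ l).2 hψ)

lemma enat_shift1 (k a b : ℕ) (i : ℕ∞) :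
    ((k + a : ℕ) : ℕ∞) + i ≤ ((k + b : ℕ) : ℕ∞) ↔ (a : ℕ∞) + i ≤ (b : ℕ∞) := by
  push_cast
  rw [add_assoc]
  exact WithTop.add_le_add_iff_left (ENat.coe_ne_top k)

lemma enat_shift2 (k a b : ℕ) (j : ℕ∞) :
    ((k + b : ℕ) : ℕ∞) ≤ ((k + a : ℕ) : ℕ∞) + j ↔ (b : ℕ∞) ≤ (a : ℕ∞) + j := by
  push_cast
  rw [add_assoc]
  exact WithTop.add_le_add_iff_left (ENat.coe_ne_top k)

lemma sat_shift (φ : STL Y) (k : ℕ) : ∀ (n : ℕ) (σ : ℕ → Y → ℝ),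
    Sat σ φ (k + n) ↔ Sat (fun m => σ (k + m)) φ n := by
  induction φ with
  | top => intro n σ; exact Iff.rfl
  | gt y c => intro n σ; exact Iff.rfl
  | lt y c => intro n σ; exact Iff.rfl
  | neg φ ih => intro n σ; simp only [Sat]; rw [ih]
  | or φ ψ ih1 ih2 => intro n σ; simp only [Sat]; rw [ih1, ih2]
  | next φ ih => intro n σ; exact ih (n + 1) σ
  | untl i j hij φ ψ ih1 ih2 =>
      intro n σ
      constructor
      · rintro ⟨l, ⟨h1, h2⟩, hψ, hφ⟩
        have hkl : k + n ≤ l := by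
          have : ((k + n : ℕ) : ℕ∞) ≤ (l : ℕ∞) := le_trans le_self_add h1
          exact_mod_cast this
        have hl : l = k + (l - k) := by omega
        refine ⟨l - k, ⟨?_, ?_⟩, ?_, ?_⟩
        · rw [hl] at h1; exact (enat_shift1 k n (l - k) i).mp h1
        · rw [hl] at h2; exact (enat_shift2 k n (l - k) j).mp h2
        · have := (ih2 (l - k) σ).mp (by rw [← hl]; exact hψ)
          exact this
        · intro m hm1 hm2
          exact (ih1 m σ).mp (hφ (k + m) (by omega) (by omega))
      · rintro ⟨l', ⟨h1, h2⟩, hψ, hφ⟩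
        refine ⟨k + l', ⟨(enat_shift1 k n l' i).mpr h1, (enat_shift2 k n l' j).mpr h2⟩,
          (ih2 l' σ).mpr hψ, ?_⟩
        intro m hm1 hm2
        have := (ih1 (m - k) σ).mpr (hφ (m - k) (by omega) (by omega))
        rwa [show k + (m - k) = m by omega] at this

end STLpaper

open STLpaper in
/-- Completeness of the upper end of the robust satisfaction interval:
if `σ[k..|σ|−1] ∈ ⟦φ⟧_sup` then `sup(RoSI(φ,σ,k)) ≥ 0`. -/
theorem mem_supSem_RoSIsup_nonneg (Y : Type) [Fintype Y] (φ : STL Y)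
    (σ : List (Y → ℝ)) (k : ℕ) (h : σ.drop k ∈ supSem φ) :
    0 ≤ RoSIsup φ σ k := by
  obtain ⟨σ', hs⟩ := h
  set σ'' : ℕ → Y → ℝ := fun j => σ' (j - (k - σ.length)) with hσ''
  have heq : (fun m => cat σ σ'' (k + m)) = cat (σ.drop k) σ' :=
    funext fun m => cat_shift σ σ' k m
  have hsat : Sat (cat σ σ'') φ k :=
    (sat_shift φ k 0 (cat σ σ'')).mpr (by rw [heq]; exact hs)
  exact le_trans ((sound φ (cat σ σ'') k).1 hsat)
    (le_iSup (fun τ => Rob (cat σ τ) φ k) σ'')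
end

section
/- Correctness of the computable robustness upper bound for falsification: for every STL formula φ over a finite set Y of variables and every finite signal σ = u₀,…,u_{n−1} ∈ (ℝ^Y)^*, if sup([ρ](φ,σ,0)) < 0 then for every infinite signal σ' ∈ (ℝ^Y)^ω we have σ·σ' ⊭ φ. -/
namespace STLpaper

variable {Y : Type}

lemma sat_rob (σ : ℕ → Y → ℝ) (φ : STL Y) :
    ∀ k, (Sat σ φ k → 0 ≤ Rob σ φ k) ∧ (¬ Sat σ φ k → Rob σ φ k ≤ 0) := by
  induction φ with
  | top =>
    intro k
    exact ⟨fun _ => by simp [Rob], fun h => absurd trivial h⟩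
  | gt y c =>
    intro k
    constructor
    · intro h
      have h' : (0:ℝ) ≤ σ k y - c := by
        have : σ k y > c := h
        linarith
      simp only [Rob]
      exact_mod_cast h'
    · intro h
      have h' : σ k y ≤ c := not_lt.mp h
      have h'' : σ k y - c ≤ (0:ℝ) := by linarith
      simp only [Rob]
      exact_mod_cast h''
  | lt y c =>
    intro k
    constructor
    · intro h
      have h0 : σ k y < c := h
      have h' : (0:ℝ) ≤ -(σ k y) + c := by linarith
      simp only [Rob]
      exact_mod_cast h'
    · intro h
      have h' : c ≤ σ k y := not_lt.mp h
      have h'' : -(σ k y) + c ≤ (0:ℝ) := by linarith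
      simp only [Rob]
      exact_mod_cast h''
  | neg φ ih =>
    intro k
    constructor
    · intro h
      have h1 : Rob σ φ k ≤ 0 := (ih k).2 h
      have h2 : -Rob σ φ k ≥ -0 := EReal.neg_le_neg_iff.mpr h1
      simpa [Rob] using h2
    · intro h
      have h1 : 0 ≤ Rob σ φ k := (ih k).1 (not_not.mp h)
      have h2 : -Rob σ φ k ≤ -0 := EReal.neg_le_neg_iff.mpr h1
      simpa [Rob] using h2
  | or φ ψ ihφ ihψ =>
    intro k
    constructor
    · intro h
      rcases h with h | h
      · exact le_max_of_le_left ((ihφ k).1 h)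
      · exact le_max_of_le_right ((ihψ k).1 h)
    · intro h
      have h' : ¬ Sat σ φ k ∧ ¬ Sat σ ψ k := by
        constructor
        · intro hx; exact h (Or.inl hx)
        · intro hx; exact h (Or.inr hx)
      exact max_le ((ihφ k).2 h'.1) ((ihψ k).2 h'.2)
  | next φ ih =>
    intro k
    exact ⟨fun h => (ih (k+1)).1 h, fun h => (ih (k+1)).2 h⟩
  | untl i j hij φ ψ ihφ ihψ =>
    intro k
    constructor
    · rintro ⟨l, hl, hψ, hφ⟩
      have h1 : (0:EReal) ≤ min (Rob σ ψ l) (⨅ m ∈ Finset.Icc k l, Rob σ φ m) := by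
        refine le_min ((ihψ l).1 hψ) (le_iInf₂ fun m hm => ?_)
        rw [Finset.mem_Icc] at hm
        exact (ihφ m).1 (hφ m hm.1 hm.2)
      simp only [Rob]
      exact h1.trans
        (le_biSup (fun l => min (Rob σ ψ l) (⨅ m ∈ Finset.Icc k l, Rob σ φ m)) hl)
    · intro h
      simp only [Rob]
      refine iSup₂_le fun l hl => ?_
      by_cases hψl : Sat σ ψ l
      · by_cases hφl : ∀ m : ℕ, k ≤ m → m ≤ l → Sat σ φ m
        · exact absurd ⟨l, hl, hψl, hφl⟩ h
        · push_neg at hφl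
          obtain ⟨m, hm1, hm2, hm3⟩ := hφl
          refine (min_le_right _ _).trans ?_
          refine (biInf_le _ ?_).trans ((ihφ m).2 hm3)
          exact Finset.mem_Icc.mpr ⟨hm1, hm2⟩
      · exact (min_le_left _ _).trans ((ihψ l).2 hψl)

lemma finRob_bounds (σ : List (Y → ℝ)) (σ' : ℕ → Y → ℝ) (φ : STL Y) :
    ∀ k, (finRob σ φ k).1 ≤ Rob (cat σ σ') φ k ∧ Rob (cat σ σ') φ k ≤ (finRob σ φ k).2 := by
  induction φ with
  | top =>
    intro k
    simp [finRob, Rob]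
  | gt y c =>
    intro k
    by_cases h : k < σ.length
    · simp [finRob, Rob, cat, h]
    · simp [finRob, Rob, h]
  | lt y c =>
    intro k
    by_cases h : k < σ.length
    · simp [finRob, Rob, cat, h]
    · simp [finRob, Rob, h]
  | neg φ ih =>
    intro k
    constructor
    · simpa [finRob, Rob, EReal.neg_le_neg_iff] using
        EReal.neg_le_neg_iff.mpr (ih k).2
    · simpa [finRob, Rob] using EReal.neg_le_neg_iff.mpr (ih k).1
  | or φ ψ ihφ ihψ =>
    intro k
    exact ⟨max_le_max (ihφ k).1 (ihψ k).1, max_le_max (ihφ k).2 (ihψ k).2⟩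
  | next φ ih =>
    intro k
    exact ih (k+1)
  | untl i j hij φ ψ ihφ ihψ =>
    intro k
    constructor
    · refine iSup₂_mono fun l hl => min_le_min (ihψ l).1 ?_
      exact iInf₂_mono fun m hm => (ihφ m).1
    · refine iSup₂_mono fun l hl => min_le_min (ihψ l).2 ?_
      exact iInf₂_mono fun m hm => (ihφ m).2

end STLpaper

open STLpaper in
/-- Correctness of the computable robustness upper bound for falsification:
if `sup([ρ](φ,σ,0)) < 0` then for every infinite `σ'`, `σ·σ' ⊭ φ`. -/
theorem finRob_sup_neg_falsified (Y : Type) [Fintype Y] (φ : STL Y)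
    (σ : List (Y → ℝ)) (h : (finRob σ φ 0).2 < 0) :
    ∀ σ' : ℕ → Y → ℝ, ¬ Sat (cat σ σ') φ 0 := by
  intro σ' hs
  have h1 := (finRob_bounds σ σ' φ 0).2
  have h2 := (sat_rob (cat σ σ') φ 0).1 hs
  exact absurd (h2.trans h1) (not_le.mpr h)
end
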